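/- Let L be a multiplicative lattice, 𝔛 an M-closed subset, and i a proper element of L. The following are equivalent: (1) i is an 𝔛-element of L; (2) (i : a) is an 𝔛-element of L for every a ≰ i; (3) every element below (i : a) is in 𝔛, for all a ≰ i. -/

import Mathlib

/-- A multiplicative lattice: a complete lattice with a commutative, associative
multiplication distributing over arbitrary joins, with top as identity. -/
class MultiplicativeLattice (L : Type*) extends CompleteLattice L, CommMonoid L where
  mul_sSup : ∀ (a : L) (S : Set L), a * sSup S = ⨆ b ∈ S, a * b
  one_eq_top : (1 : L) = ⊤

/-- The December 2024 Mathlib definition of a compact element of a complete lattice. -/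
def CompleteLattice.IsCompactElement {α : Type*} [CompleteLattice α] (k : α) :=
  ∀ s : Set α, k ≤ sSup s → ∃ t : Finset α, ↑t ⊆ s ∧ k ≤ t.sup id

namespace MultiplicativeLattice

variable {L : Type*}

/-- A subset is M-closed if it is closed under multiplication. -/
def MClosed [MultiplicativeLattice L] (X : Set L) : Prop :=
  ∀ a ∈ X, ∀ b ∈ X, a * b ∈ X

/-- A proper element `i` is an `X`-element if `a * b ≤ i` and `a ∉ X` imply `b ≤ i`. -/
def IsXElement [MultiplicativeLattice L] (X : Set L) (i : L) : Prop :=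
  i ≠ ⊤ ∧ ∀ a b : L, a * b ≤ i → a ∉ X → b ≤ i

/-- A prime element. -/
def IsPrime [MultiplicativeLattice L] (p : L) : Prop :=
  p ≠ ⊤ ∧ ∀ a b : L, a * b ≤ p → a ≤ p ∨ b ≤ p

/-- The residual `(i : a) = ⋁ {x | x * a ≤ i}`. -/
def residual [MultiplicativeLattice L] (i a : L) : L := sSup {x : L | x * a ≤ i}

/-- The radical of an element. -/
def radical [MultiplicativeLattice L] (a : L) : L :=
  sSup {x : L | CompleteLattice.IsCompactElement x ∧ ∃ n : ℕ, x ^ (n + 1) ≤ a}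

/-- A primary element. -/
def IsPrimary [MultiplicativeLattice L] (i : L) : Prop :=
  i ≠ ⊤ ∧ ∀ a b : L, a * b ≤ i → a ≤ i ∨ b ≤ radical i

/-- A minimal prime element. -/
def IsMinimalPrime [MultiplicativeLattice L] (p : L) : Prop :=
  IsPrime p ∧ ∀ q : L, IsPrime q → q ≤ p → q = p

/-- An `X`-multiplicatively closed subset: a nonempty set `A` of compact elements
containing `L_* \ X`, with `a₁ ∈ L_* \ X` and `a₂ ∈ A` implying `a₁ * a₂ ∈ A`. -/
def IsXMultClosed [MultiplicativeLattice L] (X A : Set L) : Prop :=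
  A.Nonempty ∧ (∀ a ∈ A, CompleteLattice.IsCompactElement a) ∧
    ({c : L | CompleteLattice.IsCompactElement c} \ X) ⊆ A ∧
    ∀ a₁ ∈ ({c : L | CompleteLattice.IsCompactElement c} \ X), ∀ a₂ ∈ A, a₁ * a₂ ∈ A

end MultiplicativeLattice

/-- A c-lattice: a compactly generated multiplicative lattice in which `⊤` is compact
and the product of compact elements is compact. -/
class CLattice (L : Type*) extends MultiplicativeLattice L where
  compactlyGenerated : ∀ x : L,
    x = sSup {c : L | CompleteLattice.IsCompactElement c ∧ c ≤ x}
  compact_top : CompleteLattice.IsCompactElement (⊤ : L)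
  compact_mul : ∀ a b : L, CompleteLattice.IsCompactElement a →
    CompleteLattice.IsCompactElement b → CompleteLattice.IsCompactElement (a * b)

open MultiplicativeLattice CompleteLattice

section Helpers
variable {L : Type*} [MultiplicativeLattice L]

private lemma myMulLeMul (a : L) {b c : L} (h : b ≤ c) : a * b ≤ a * c := by
  have h1 : a * (b ⊔ c) = a * b ⊔ a * c := by
    have := MultiplicativeLattice.mul_sSup a {b, c}
    rwa [sSup_pair, iSup_pair] at this
  have h2 : b ⊔ c = c := sup_eq_right.mpr h
  rw [h2] at h1
  rw [h1]; exact le_sup_left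

private lemma myResLe {i a x : L} (h : x * a ≤ i) : x ≤ residual i a :=
  le_sSup h

private lemma myResMul (i a : L) : residual i a * a ≤ i := by
  rw [mul_comm, MultiplicativeLattice.residual, MultiplicativeLattice.mul_sSup]
  apply iSup_le; intro b; apply iSup_le; intro hb
  rw [mul_comm]; exact hb

private lemma myLeRes {i a x : L} (h : x ≤ residual i a) : x * a ≤ i :=
  calc x * a = a * x := mul_comm _ _
    _ ≤ a * residual i a := myMulLeMul a h
    _ = residual i a * a := mul_comm _ _
    _ ≤ i := myResMul i a

end Helpers

theorem stmt8 {L : Type*} [MultiplicativeLattice L] (X : Set L) (hX : MClosed X)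
    (i : L) (hi : i ≠ ⊤) :
    (IsXElement X i ↔ ∀ a : L, ¬ a ≤ i → IsXElement X (residual i a)) ∧
    (IsXElement X i ↔ ∀ a : L, ¬ a ≤ i → ∀ x : L, x ≤ residual i a → x ∈ X) := by
  have key1 : IsXElement X i → ∀ a : L, ¬ a ≤ i → IsXElement X (residual i a) := by
    intro ⟨_, hXe⟩ a ha
    constructor
    · intro htop
      apply ha
      have : (⊤ : L) * a ≤ i := myLeRes (htop ▸ le_refl _)
      rwa [← MultiplicativeLattice.one_eq_top, one_mul] at this
    · intro b c hbc hb
      apply myResLe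
      have : b * (c * a) ≤ i := by rw [← mul_assoc]; exact myLeRes hbc
      exact hXe b (c * a) this hb
  have key2 : (∀ a : L, ¬ a ≤ i → IsXElement X (residual i a)) → IsXElement X i := by
    intro h
    refine ⟨hi, fun a b hab ha => ?_⟩
    by_contra hb
    obtain ⟨hne, hXe⟩ := h b hb
    apply hne
    have hale : a ≤ residual i b := myResLe hab
    have : (⊤ : L) ≤ residual i b := by
      apply hXe a ⊤ _ ha
      rw [← MultiplicativeLattice.one_eq_top, mul_one]
      exact hale
    exact top_le_iff.mp this
  have key3 : IsXElement X i → ∀ a : L, ¬ a ≤ i → ∀ x : L, x ≤ residual i a → x ∈ X := by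
    intro ⟨_, hXe⟩ a ha x hx
    by_contra hxX
    exact ha (hXe x a (myLeRes hx) hxX)
  have key4 : (∀ a : L, ¬ a ≤ i → ∀ x : L, x ≤ residual i a → x ∈ X) → IsXElement X i := by
    intro h
    refine ⟨hi, fun a b hab ha => ?_⟩
    by_contra hb
    exact ha (h b hb a (myResLe hab))
  exact ⟨⟨key1, key2⟩, ⟨key3, key4⟩⟩
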